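/- Let L be a symmetric positive definite m×m real matrix and let E be a diagonal m×m matrix with strictly positive diagonal entries E_{ii}. Then for every subset A ⊆ {1,…,m}, P_{ELE}(A) = exp( ∑_{i∈A} 2 log E_{ii} − ( log det(ELE + I) − log det(L + I) ) ) · P_L(A). Hence the subfamily of determinantal point processes obtained by varying the diagonal scaling of a fixed kernel L is an exponential family with sufficient statistics the indicators T_{\{i\}}(A) = 1_{i∈A} and canonical parameters t_i = 2 log E_{ii} (the partially e-flat structure of the quality parameters). -/

import Mathlib

/-- The determinant of the principal submatrix of `M` with rows and columns in `A`
(equal to `1` when `A = ∅`). -/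
noncomputable def pminor {m : ℕ} (M : Matrix (Fin m) (Fin m) ℝ) (A : Finset (Fin m)) : ℝ :=
  (M.submatrix (fun i : A => (i : Fin m)) (fun j : A => (j : Fin m))).det

/-- The `L`-ensemble determinantal point process. -/
noncomputable def dppP {m : ℕ} (L : Matrix (Fin m) (Fin m) ℝ) (A : Finset (Fin m)) : ℝ :=
  pminor L A / (L + 1).det

open Matrix

lemma posdef_dld {m : ℕ} {L : Matrix (Fin m) (Fin m) ℝ} (hL : L.PosDef)
    (d : Fin m → ℝ) (hd : ∀ i, 0 < d i) :
    (Matrix.diagonal d * L * Matrix.diagonal d).PosDef := by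
  refine Matrix.PosDef.of_dotProduct_mulVec_pos ?_ ?_
  · have h1 := hL.isHermitian
    simp only [Matrix.IsHermitian, Matrix.conjTranspose_mul,
      Matrix.diagonal_conjTranspose, star_trivial] at *
    rw [h1]
    ext i j
    simp [Matrix.mul_apply, Matrix.diagonal, mul_comm, mul_left_comm, Finset.mul_sum]
  · intro x hx
    have hxy : (Matrix.diagonal d *ᵥ x) ≠ 0 := by
      intro h
      apply hx
      funext i
      have := congrFun h i
      simp [Matrix.mulVec_diagonal] at this
      rcases this with h | h
      · exact absurd h (hd i).ne'
      · exact h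
    have := hL.dotProduct_mulVec_pos hxy
    calc 0 < dotProduct (star (Matrix.diagonal d *ᵥ x)) (L *ᵥ (Matrix.diagonal d *ᵥ x)) := this
      _ = dotProduct (star x) ((Matrix.diagonal d * L * Matrix.diagonal d) *ᵥ x) := by
          simp only [star_trivial, ← Matrix.mulVec_mulVec, dotProduct,
            Matrix.mulVec_diagonal]
          refine Finset.sum_congr rfl fun i _ => ?_
          ring

lemma pminor_dld {m : ℕ} (L : Matrix (Fin m) (Fin m) ℝ) (d : Fin m → ℝ)
    (A : Finset (Fin m)) :
    pminor (Matrix.diagonal d * L * Matrix.diagonal d) A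
      = (∏ i ∈ A, d i)^2 * pminor L A := by
  unfold pminor
  have : (Matrix.diagonal d * L * Matrix.diagonal d).submatrix
      (fun i : A => (i : Fin m)) (fun j : A => (j : Fin m))
    = Matrix.diagonal (fun i : A => d i)
      * L.submatrix (fun i : A => (i : Fin m)) (fun j : A => (j : Fin m))
      * Matrix.diagonal (fun i : A => d i) := by
    ext i j
    simp [Matrix.mul_diagonal, Matrix.diagonal_mul, Matrix.submatrix_apply, mul_comm,
      mul_left_comm]
  rw [this, Matrix.det_mul, Matrix.det_mul, Matrix.det_diagonal]
  rw [show ∏ i : A, d i = ∏ i ∈ A, d i from Finset.prod_coe_sort A d]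
  ring

theorem dpp_diagonal_scaling_exponential_family (m : ℕ) (L : Matrix (Fin m) (Fin m) ℝ)
    (hsymm : L.IsSymm) (hL : L.PosDef)
    (d : Fin m → ℝ) (hd : ∀ i, 0 < d i)
    (E : Matrix (Fin m) (Fin m) ℝ) (hE : E = Matrix.diagonal d)
    (A : Finset (Fin m)) :
    dppP (E * L * E) A
      = Real.exp ((∑ i ∈ A, 2 * Real.log (E i i))
          - (Real.log (E * L * E + 1).det - Real.log (L + 1).det)) * dppP L A := by
  subst hE
  have hM : (Matrix.diagonal d * L * Matrix.diagonal d).PosDef := posdef_dld hL d hd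
  have hdetL : (0:ℝ) < (L + 1).det := (hL.add_posSemidef Matrix.PosSemidef.one).det_pos
  have hdetM : (0:ℝ) < (Matrix.diagonal d * L * Matrix.diagonal d + 1).det :=
    (hM.add_posSemidef Matrix.PosSemidef.one).det_pos
  have hsum : ∑ i ∈ A, 2 * Real.log (Matrix.diagonal d i i)
      = Real.log ((∏ i ∈ A, d i)^2) := by
    rw [← Finset.prod_pow, Real.log_prod]
    · refine Finset.sum_congr rfl fun i _ => ?_
      rw [Real.log_pow]
      simp [Matrix.diagonal]
    · intro i hi
      exact pow_ne_zero 2 (hd i).ne'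
  rw [hsum, Real.exp_sub, Real.exp_sub, Real.exp_log hdetL, Real.exp_log hdetM,
    Real.exp_log (pow_pos (Finset.prod_pos fun i _ => hd i) 2)]
  unfold dppP
  rw [pminor_dld]
  field_simp
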